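/- Let φ be a one-variable first-order modal formula with counting quantifiers and let M = (W,≺,D,d,I) be a constant domain first-order Kripke model whose frame (W,≺) is an irreflexive intransitive tree of depth ≤ md(φ), with M,w₀ ⊨^{a₀} φ for some w₀ ∈ W and a₀ ∈ D. For w ∈ W and a ∈ D let tp(w,a) := {ξ ∈ sub(φ) : M,w ⊨^a ξ}. Then setting T_w := {tp(w,a) : a ∈ D}, μ_w(t) := min(|{a ∈ D : tp(w,a) = t}|, C+1) where C = cpt(φ), and r_a(w) := tp(w,a) for each a ∈ D, the tuple (W,≺,q,D,{r_a}_{a∈D}) with q(w) = (T_w,μ_w) is a quasimodel for φ. -/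

import Mathlib

/-! Syntax of one-variable first-order modal formulas with counting quantifiers:
    φ ::= P(x) | ¬φ | (φ∧φ) | ◇φ | ∃[≤c]x φ. -/

inductive Fml : Type
  | atom : ℕ → Fml
  | neg : Fml → Fml
  | conj : Fml → Fml → Fml
  | dia : Fml → Fml
  | countLe : ℕ → Fml → Fml
deriving DecidableEq

namespace Fml

/-- Subformulas. -/
def sub : Fml → Finset Fml
  | atom n => {atom n}
  | neg ψ => insert (neg ψ) ψ.sub
  | conj ψ χ => insert (conj ψ χ) (ψ.sub ∪ χ.sub)
  | dia ψ => insert (dia ψ) ψ.sub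
  | countLe c ψ => insert (countLe c ψ) ψ.sub

/-- Modal depth. -/
def md : Fml → ℕ
  | atom _ => 0
  | neg ψ => ψ.md
  | conj ψ χ => max ψ.md χ.md
  | dia ψ => ψ.md + 1
  | countLe _ ψ => ψ.md

/-- Capacity: the largest counting-quantifier subscript (0 if none). -/
def cpt : Fml → ℕ
  | atom _ => 0
  | neg ψ => ψ.cpt
  | conj ψ χ => max ψ.cpt χ.cpt
  | dia ψ => ψ.cpt
  | countLe c ψ => max c ψ.cpt

/-- Length of the formula as a string, counting subscripts written in binary. -/
def len : Fml → ℕ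
  | atom _ => 1
  | neg ψ => ψ.len + 1
  | conj ψ χ => ψ.len + χ.len + 1
  | dia ψ => ψ.len + 1
  | countLe c ψ => ψ.len + Nat.size c + 1

/-- Predicate symbols occurring in a formula. -/
def preds : Fml → Finset ℕ
  | atom n => {n}
  | neg ψ => ψ.preds
  | conj ψ χ => ψ.preds ∪ χ.preds
  | dia ψ => ψ.preds
  | countLe _ ψ => ψ.preds

def imp (ψ χ : Fml) : Fml := neg (conj ψ (neg χ))
def or (ψ χ : Fml) : Fml := neg (conj (neg ψ) (neg χ))
def iff (ψ χ : Fml) : Fml := conj (ψ.imp χ) (χ.imp ψ)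
def box (ψ : Fml) : Fml := neg (dia (neg ψ))
/-- `∃x ψ := ¬∃[≤0]x ψ`. -/
def ex (ψ : Fml) : Fml := neg (countLe 0 ψ)
/-- `∀x ψ := ∃[≤0]x ¬ψ`. -/
def fal (ψ : Fml) : Fml := countLe 0 (neg ψ)
/-- A tautology. -/
def top : Fml := neg (conj (atom 0) (neg (atom 0)))

/-- `boxIter n ψ` is `□^n ψ`. -/
def boxIter : ℕ → Fml → Fml
  | 0, ψ => ψ
  | n+1, ψ => (boxIter n ψ).box

/-- `boxLe m ψ` is `⋀_{k=0}^{m} □^k ψ`. -/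
def boxLe : ℕ → Fml → Fml
  | 0, ψ => ψ
  | n+1, ψ => conj (boxLe n ψ) (boxIter (n+1) ψ)

end Fml

/-- A first-order Kripke model `M = (W,R,D,d,I)` (unary predicates suffice for the
one-variable fragment). -/
structure KModel where
  W : Type
  R : W → W → Prop
  D : Type
  Dne : Nonempty D
  dom : W → Set D
  domNe : ∀ w, (dom w).Nonempty
  I : W → ℕ → Set D
  Isub : ∀ w p, I w p ⊆ dom w

/-- Satisfaction `M,w ⊨^a φ`. -/
def KModel.sat (M : KModel) : Fml → M.W → M.D → Prop
  | .atom p, w, a => a ∈ M.I w p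
  | .neg ψ, w, a => ¬ M.sat ψ w a
  | .conj ψ χ, w, a => M.sat ψ w a ∧ M.sat χ w a
  | .dia ψ, w, a => ∃ v, M.R w v ∧ M.sat ψ v a
  | .countLe c ψ, w, _ => {b | b ∈ M.dom w ∧ M.sat ψ w b}.encard ≤ (c : ℕ∞)

def KModel.constDom (M : KModel) : Prop := ∀ u v, M.dom u = M.dom v
def KModel.expDom (M : KModel) : Prop := ∀ u v, M.R u v → M.dom u ⊆ M.dom v
def KModel.decDom (M : KModel) : Prop := ∀ u v, M.R u v → M.dom v ⊆ M.dom u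

/-- Satisfiability with respect to QK (constant domains). -/
def satQK (φ : Fml) : Prop :=
  ∃ M : KModel, M.constDom ∧ ∃ w a, a ∈ M.dom w ∧ M.sat φ w a

/-- Satisfiability with respect to QK^exp (expanding domains). -/
def satQKexp (φ : Fml) : Prop :=
  ∃ M : KModel, M.expDom ∧ ∃ w a, a ∈ M.dom w ∧ M.sat φ w a

/-- Satisfiability with respect to QK^dec (decreasing domains). -/
def satQKdec (φ : Fml) : Prop :=
  ∃ M : KModel, M.decDom ∧ ∃ w a, a ∈ M.dom w ∧ M.sat φ w a

/-- `R` is the immediate-successor (parent–child) relation of a rooted irreflexive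
intransitive tree of depth ≤ m with root `r`. -/
def IsTreeOfDepth {W : Type} (R : W → W → Prop) (r : W) (m : ℕ) : Prop :=
  ∃ depth : W → ℕ,
    depth r = 0 ∧ (∀ w, depth w ≤ m) ∧
    (∀ u v, R u v → depth v = depth u + 1) ∧
    (∀ v, v ≠ r → ∃! u, R u v) ∧
    (∀ v, Relation.ReflTransGen R r v)

/-- A type for φ: a Boolean-saturated subset of sub(φ). -/
def IsType (φ : Fml) (t : Finset Fml) : Prop :=
  t ⊆ φ.sub ∧
  (∀ ψ, Fml.neg ψ ∈ φ.sub → (Fml.neg ψ ∈ t ↔ ψ ∉ t)) ∧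
  (∀ ψ χ, Fml.conj ψ χ ∈ φ.sub → (Fml.conj ψ χ ∈ t ↔ ψ ∈ t ∧ χ ∈ t))

/-- A quasistate for φ: a nonempty set of types with a multiplicity function
`μ : T → {1,…,cpt(φ)+1}` satisfying ∃[≤c]-saturation. -/
structure IsQuasistate (φ : Fml) (T : Finset (Finset Fml)) (μ : Finset Fml → ℕ) : Prop where
  nonempty : T.Nonempty
  types : ∀ t ∈ T, IsType φ t
  mu_pos : ∀ t ∈ T, 1 ≤ μ t
  mu_le : ∀ t ∈ T, μ t ≤ φ.cpt + 1
  count : ∀ t ∈ T, ∀ c ξ, Fml.countLe c ξ ∈ φ.sub →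
    (Fml.countLe c ξ ∈ t ↔ (T.filter (fun t' => ξ ∈ t')).sum μ ≤ c)

/-- `(W,≺,q,I,{r_i})` is a quasimodel for φ. -/
structure IsQuasimodel (φ : Fml) {W I : Type} (prec : W → W → Prop) (root : W)
    (T : W → Finset (Finset Fml)) (μ : W → Finset Fml → ℕ)
    (r : I → W → Finset Fml) : Prop where
  tree : IsTreeOfDepth prec root φ.md
  qs : ∀ w, IsQuasistate φ (T w) (μ w)
  ine : Nonempty I
  run : ∀ i w, r i w ∈ T w
  witness : ∃ w t, t ∈ T w ∧ φ ∈ t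
  coherence : ∀ i w v ξ, Fml.dia ξ ∈ φ.sub → prec w v → ξ ∈ r i v → Fml.dia ξ ∈ r i w
  saturation : ∀ i w ξ, Fml.dia ξ ∈ φ.sub → Fml.dia ξ ∈ r i w → ∃ v, prec w v ∧ ξ ∈ r i v
  mult : ∀ w t, t ∈ T w → (μ w t : ℕ∞) = min {i : I | r i w = t}.encard ((φ.cpt : ℕ∞) + 1)

/-- Bundled quasimodels for φ. -/
structure Quasimodel (φ : Fml) where
  W : Type
  I : Type
  prec : W → W → Prop
  root : W
  T : W → Finset (Finset Fml)
  μ : W → Finset Fml → ℕ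
  r : I → W → Finset Fml
  isQM : IsQuasimodel φ prec root T μ r

open scoped Classical in
/-- `tp(w,a) = {ξ ∈ sub(φ) : M,w ⊨^a ξ}`. -/
noncomputable def modelType (M : KModel) (φ : Fml) (w : M.W) (a : M.D) : Finset Fml :=
  φ.sub.filter (fun ξ => M.sat ξ w a)

open scoped Classical in
/-- `T_w = {tp(w,a) : a ∈ d(w₀)}`. -/
noncomputable def modelT (M : KModel) (φ : Fml) (w₀ : M.W) (w : M.W) : Finset (Finset Fml) :=
  φ.sub.powerset.filter (fun t => ∃ a ∈ M.dom w₀, modelType M φ w a = t)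

/-- `μ_w(t) = min(|{a ∈ d(w₀) : tp(w,a) = t}|, cpt(φ)+1)`. -/
noncomputable def modelMu (M : KModel) (φ : Fml) (w₀ : M.W) (w : M.W) (t : Finset Fml) : ℕ :=
  (min {a : M.D | a ∈ M.dom w₀ ∧ modelType M φ w a = t}.encard ((φ.cpt : ℕ∞) + 1)).toNat

namespace Fml

theorem mem_sub_self : ∀ ψ : Fml, ψ ∈ ψ.sub := by
  intro ψ; cases ψ <;> simp [sub]

theorem sub_closed : ∀ φ ψ : Fml, ψ ∈ φ.sub → ψ.sub ⊆ φ.sub := by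
  intro φ
  induction φ with
  | atom n => intro ψ h; simp [sub] at h; subst h; simp [sub]
  | neg χ ih =>
      intro ψ h; simp [sub] at h
      rcases h with h | h
      · subst h; exact subset_rfl
      · exact (ih ψ h).trans (Finset.subset_insert _ _)
  | conj χ₁ χ₂ ih₁ ih₂ =>
      intro ψ h; simp [sub] at h
      rcases h with h | h | h
      · subst h; exact subset_rfl
      · exact (ih₁ ψ h).trans ((Finset.subset_union_left).trans (Finset.subset_insert _ _))
      · exact (ih₂ ψ h).trans ((Finset.subset_union_right).trans (Finset.subset_insert _ _))
  | dia χ ih =>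
      intro ψ h; simp [sub] at h
      rcases h with h | h
      · subst h; exact subset_rfl
      · exact (ih ψ h).trans (Finset.subset_insert _ _)
  | countLe c χ ih =>
      intro ψ h; simp [sub] at h
      rcases h with h | h
      · subst h; exact subset_rfl
      · exact (ih ψ h).trans (Finset.subset_insert _ _)

theorem cpt_mono : ∀ φ ψ : Fml, ψ ∈ φ.sub → ψ.cpt ≤ φ.cpt := by
  intro φ
  induction φ with
  | atom n => intro ψ h; simp [sub] at h; subst h; exact le_rfl
  | neg χ ih =>
      intro ψ h; simp [sub] at h
      rcases h with h | h
      · subst h; exact le_rfl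
      · exact ih ψ h
  | conj χ₁ χ₂ ih₁ ih₂ =>
      intro ψ h; simp [sub] at h
      rcases h with h | h | h
      · subst h; exact le_rfl
      · exact (ih₁ ψ h).trans (le_max_left _ _)
      · exact (ih₂ ψ h).trans (le_max_right _ _)
  | dia χ ih =>
      intro ψ h; simp [sub] at h
      rcases h with h | h
      · subst h; exact le_rfl
      · exact ih ψ h
  | countLe c χ ih =>
      intro ψ h; simp [sub] at h
      rcases h with h | h
      · subst h; exact le_rfl
      · exact (ih ψ h).trans (le_max_right _ _)

end Fml

theorem mem_modelType_iff (M : KModel) (φ ξ : Fml) (w : M.W) (a : M.D)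
    (hξ : ξ ∈ φ.sub) : ξ ∈ modelType M φ w a ↔ M.sat ξ w a := by
  classical
  simp [modelType, hξ]

theorem mem_modelT_iff (M : KModel) (φ : Fml) (w₀ w : M.W) (t : Finset Fml) :
    t ∈ modelT M φ w₀ w ↔ t ⊆ φ.sub ∧ ∃ a ∈ M.dom w₀, modelType M φ w a = t := by
  classical
  simp [modelT]

theorem modelType_mem_modelT (M : KModel) (φ : Fml) (w₀ w : M.W) (a : M.D)
    (ha : a ∈ M.dom w₀) : modelType M φ w a ∈ modelT M φ w₀ w := by
  classical
  rw [mem_modelT_iff]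
  exact ⟨Finset.filter_subset _ _, a, ha, rfl⟩

theorem encard_biUnion {α β : Type*} (F : Finset β) (S : β → Set α)
    (h : ∀ i ∈ F, ∀ j ∈ F, i ≠ j → Disjoint (S i) (S j)) :
    (⋃ i ∈ F, S i).encard = ∑ i ∈ F, (S i).encard := by
  classical
  induction F using Finset.induction_on with
  | empty => simp
  | @insert a F ha ih =>
      have hd : Disjoint (S a) (⋃ i ∈ F, S i) := by
        rw [Set.disjoint_iUnion_right]
        intro i
        rw [Set.disjoint_iUnion_right]
        intro hi
        exact h a (Finset.mem_insert_self _ _) i (Finset.mem_insert_of_mem hi)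
          (by rintro rfl; exact ha hi)
      rw [Finset.set_biUnion_insert, Set.encard_union_eq hd, Finset.sum_insert ha,
        ih (fun i hi j hj hij => h i (Finset.mem_insert_of_mem hi) j (Finset.mem_insert_of_mem hj) hij)]

section Aux

variable (M : KModel) (φ : Fml) (w₀ : M.W)

/-- The set of domain elements of a given type. -/
def typeSet (w : M.W) (t : Finset Fml) : Set M.D :=
  {a : M.D | a ∈ M.dom w₀ ∧ modelType M φ w a = t}

theorem typeSet_disjoint (w : M.W) {t t' : Finset Fml} (h : t ≠ t') :
    Disjoint (typeSet M φ w₀ w t) (typeSet M φ w₀ w t') := by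
  rw [Set.disjoint_left]
  rintro a ⟨-, h1⟩ ⟨-, h2⟩
  exact h (h1 ▸ h2)

theorem isType_modelType (w : M.W) (a : M.D) : IsType φ (modelType M φ w a) := by
  classical
  refine ⟨Finset.filter_subset _ _, ?_, ?_⟩
  · intro ψ hψ
    have hψ' : ψ ∈ φ.sub := Fml.sub_closed φ _ hψ (by simp [Fml.sub, Fml.mem_sub_self])
    rw [mem_modelType_iff M φ _ _ _ hψ, mem_modelType_iff M φ _ _ _ hψ']
    simp [KModel.sat]
  · intro ψ χ hψχ
    have hψ : ψ ∈ φ.sub := Fml.sub_closed φ _ hψχ (by simp [Fml.sub, Fml.mem_sub_self])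
    have hχ : χ ∈ φ.sub := Fml.sub_closed φ _ hψχ (by simp [Fml.sub, Fml.mem_sub_self])
    rw [mem_modelType_iff M φ _ _ _ hψχ, mem_modelType_iff M φ _ _ _ hψ,
      mem_modelType_iff M φ _ _ _ hχ]
    simp [KModel.sat]

theorem sum_min_toNat_le_iff {β : Type*} (F : Finset β) (E : β → ℕ∞) (c C : ℕ) (hc : c ≤ C) :
    (∑ i ∈ F, (min (E i) ((C : ℕ∞) + 1)).toNat ≤ c) ↔ (∑ i ∈ F, E i ≤ (c : ℕ∞)) := by
  have hC1 : ((C : ℕ∞) + 1) = ((C + 1 : ℕ) : ℕ∞) := by push_cast; ring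
  have hCt : ((C : ℕ∞) + 1) ≠ ⊤ := by rw [hC1]; exact ENat.coe_ne_top _
  constructor
  · intro h
    have key : ∀ i ∈ F, E i = ((min (E i) ((C : ℕ∞) + 1)).toNat : ℕ∞) := by
      intro i hi
      have hle : (min (E i) ((C : ℕ∞) + 1)).toNat ≤ c :=
        le_trans (Finset.single_le_sum (f := fun j => (min (E j) ((C : ℕ∞) + 1)).toNat)
          (fun j _ => Nat.zero_le _) hi) h
      by_cases hE : E i ≤ (C : ℕ∞) + 1
      · rw [min_eq_left hE, ENat.coe_toNat (by intro hT; rw [hT] at hE; exact hCt (top_le_iff.mp hE))]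
      · exfalso
        rw [min_eq_right (le_of_not_ge hE), hC1, ENat.toNat_coe] at hle
        omega
    calc ∑ i ∈ F, E i = ∑ i ∈ F, ((min (E i) ((C : ℕ∞) + 1)).toNat : ℕ∞) :=
          Finset.sum_congr rfl key
      _ = ((∑ i ∈ F, (min (E i) ((C : ℕ∞) + 1)).toNat : ℕ) : ℕ∞) := (Nat.cast_sum _ _).symm
      _ ≤ (c : ℕ∞) := Nat.cast_le.2 h
  · intro h
    have key : ∀ i ∈ F, ((min (E i) ((C : ℕ∞) + 1)).toNat : ℕ∞) = E i := by
      intro i hi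
      have hle : E i ≤ (c : ℕ∞) :=
        le_trans (Finset.single_le_sum (f := E) (fun j _ => zero_le) hi) h
      have hle' : E i ≤ (C : ℕ∞) + 1 :=
        le_trans hle (by rw [hC1]; exact Nat.cast_le.2 (by omega))
      rw [min_eq_left hle', ENat.coe_toNat (by intro hT; rw [hT] at hle'; exact hCt (top_le_iff.mp hle'))]
    have : ((∑ i ∈ F, (min (E i) ((C : ℕ∞) + 1)).toNat : ℕ) : ℕ∞) ≤ (c : ℕ∞) := by
      rw [Nat.cast_sum]
      calc ∑ i ∈ F, ((min (E i) ((C : ℕ∞) + 1)).toNat : ℕ∞) = ∑ i ∈ F, E i :=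
            Finset.sum_congr rfl key
        _ ≤ (c : ℕ∞) := h
    exact_mod_cast this

end Aux

/-- the structure extracted from a constant domain tree-model of φ is a
quasimodel for φ, with runs `r_a(w) = tp(w,a)` indexed by the (constant) domain. -/
theorem stmt_2 (φ : Fml) (M : KModel) (hconst : M.constDom)
    (root : M.W) (htree : IsTreeOfDepth M.R root φ.md)
    (w₀ : M.W) (a₀ : M.D) (ha₀ : a₀ ∈ M.dom w₀) (hsat : M.sat φ w₀ a₀) :
    IsQuasimodel φ M.R root (modelT M φ w₀) (modelMu M φ w₀)
      (fun (a : {a : M.D // a ∈ M.dom w₀}) (w : M.W) => modelType M φ w a.1) := by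
  classical
  have hC1 : ((φ.cpt : ℕ∞) + 1) = ((φ.cpt + 1 : ℕ) : ℕ∞) := by push_cast; ring
  have hCt : ((φ.cpt : ℕ∞) + 1) ≠ ⊤ := by rw [hC1]; exact ENat.coe_ne_top _
  -- key count equivalence used in quasistate check
  refine ⟨htree, ?_, ⟨⟨a₀, ha₀⟩⟩, ?_, ?_, ?_, ?_, ?_⟩
  · -- quasistates
    intro w
    refine ⟨⟨_, modelType_mem_modelT M φ w₀ w a₀ ha₀⟩, ?_, ?_, ?_, ?_⟩
    · intro t ht
      obtain ⟨a, -, rfl⟩ := ((mem_modelT_iff M φ w₀ w t).1 ht).2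
      exact isType_modelType M φ w a
    · intro t ht
      obtain ⟨a, ha, hat⟩ := ((mem_modelT_iff M φ w₀ w t).1 ht).2
      have hne : (typeSet M φ w₀ w t).Nonempty := ⟨a, ha, hat⟩
      have h1 : (1 : ℕ∞) ≤ min (typeSet M φ w₀ w t).encard ((φ.cpt : ℕ∞) + 1) :=
        le_min (Set.one_le_encard_iff_nonempty.2 hne) (by rw [hC1]; exact_mod_cast Nat.succ_le_succ (Nat.zero_le _))
      have hmt : min (typeSet M φ w₀ w t).encard ((φ.cpt : ℕ∞) + 1) ≠ ⊤ := by
        intro h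
        exact hCt (top_le_iff.mp (h ▸ min_le_right _ _))
      have := ENat.coe_toNat hmt
      unfold modelMu
      have h1' : (1 : ℕ∞) ≤ ((min (typeSet M φ w₀ w t).encard ((φ.cpt : ℕ∞) + 1)).toNat : ℕ∞) := by
        rw [this]; exact h1
      exact_mod_cast h1'
    · intro t ht
      unfold modelMu
      have := ENat.toNat_le_toNat (min_le_right (typeSet M φ w₀ w t).encard ((φ.cpt : ℕ∞) + 1)) hCt
      rwa [hC1, ENat.toNat_coe] at this
    · intro t ht c ξ hcξ
      have hξ : ξ ∈ φ.sub := Fml.sub_closed φ _ hcξ (by simp [Fml.sub, Fml.mem_sub_self])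
      have hcC : c ≤ φ.cpt :=
        le_trans (le_max_left c ξ.cpt) (Fml.cpt_mono φ _ hcξ)
      obtain ⟨a, ha, rfl⟩ := ((mem_modelT_iff M φ w₀ w _).1 ht).2
      set F := (modelT M φ w₀ w).filter (fun t' => ξ ∈ t') with hF
      have hsets : {b : M.D | b ∈ M.dom w ∧ M.sat ξ w b} = ⋃ t' ∈ F, typeSet M φ w₀ w t' := by
        ext b
        simp only [Set.mem_setOf_eq, Set.mem_iUnion, exists_prop]
        constructor
        · rintro ⟨hb, hbs⟩
          have hb' : b ∈ M.dom w₀ := (hconst w w₀) ▸ hb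
          refine ⟨modelType M φ w b, ?_, hb', rfl⟩
          rw [hF, Finset.mem_filter]
          exact ⟨modelType_mem_modelT M φ w₀ w b hb', (mem_modelType_iff M φ ξ w b hξ).2 hbs⟩
        · rintro ⟨t', ht', hb, rfl⟩
          rw [hF, Finset.mem_filter] at ht'
          exact ⟨(hconst w₀ w) ▸ hb, (mem_modelType_iff M φ ξ w b hξ).1 ht'.2⟩
      have hdisj := encard_biUnion F (typeSet M φ w₀ w)
        (fun i _ j _ hij => typeSet_disjoint M φ w₀ w hij)
      rw [mem_modelType_iff M φ _ w a hcξ]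
      show M.sat (Fml.countLe c ξ) w a ↔ _
      have hsem : M.sat (Fml.countLe c ξ) w a ↔
          {b : M.D | b ∈ M.dom w ∧ M.sat ξ w b}.encard ≤ (c : ℕ∞) := Iff.rfl
      rw [hsem, hsets, hdisj]
      exact (sum_min_toNat_le_iff F (fun t' => (typeSet M φ w₀ w t').encard) c φ.cpt hcC).symm
  · -- runs
    intro a w
    exact modelType_mem_modelT M φ w₀ w a.1 a.2
  · -- witness
    exact ⟨w₀, modelType M φ w₀ a₀, modelType_mem_modelT M φ w₀ w₀ a₀ ha₀,
      (mem_modelType_iff M φ φ w₀ a₀ (Fml.mem_sub_self φ)).2 hsat⟩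
  · -- coherence
    intro a w v ξ hξ hR hmem
    have hξ' : ξ ∈ φ.sub := Fml.sub_closed φ _ hξ (by simp [Fml.sub, Fml.mem_sub_self])
    rw [mem_modelType_iff M φ _ w a.1 hξ]
    exact ⟨v, hR, (mem_modelType_iff M φ ξ v a.1 hξ').1 hmem⟩
  · -- saturation
    intro a w ξ hξ hmem
    have hξ' : ξ ∈ φ.sub := Fml.sub_closed φ _ hξ (by simp [Fml.sub, Fml.mem_sub_self])
    obtain ⟨v, hR, hv⟩ := (mem_modelType_iff M φ _ w a.1 hξ).1 hmem
    exact ⟨v, hR, (mem_modelType_iff M φ ξ v a.1 hξ').2 hv⟩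
  · -- multiplicities
    intro w t ht
    have himg : (Subtype.val '' {i : {a : M.D // a ∈ M.dom w₀} | modelType M φ w i.1 = t})
        = typeSet M φ w₀ w t := by
      ext b
      constructor
      · rintro ⟨⟨b, hb⟩, hbt, rfl⟩
        exact ⟨hb, hbt⟩
      · rintro ⟨hb, hbt⟩
        exact ⟨⟨b, hb⟩, hbt, rfl⟩
    have hcard : {i : {a : M.D // a ∈ M.dom w₀} |
        (fun (a : {a : M.D // a ∈ M.dom w₀}) (w : M.W) => modelType M φ w a.1) i w = t}.encard
        = (typeSet M φ w₀ w t).encard := by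
      rw [← himg, Subtype.coe_injective.encard_image]
    have hmt : min (typeSet M φ w₀ w t).encard ((φ.cpt : ℕ∞) + 1) ≠ ⊤ := by
      intro h
      exact hCt (top_le_iff.mp (h ▸ min_le_right _ _))
    rw [hcard]
    exact ENat.coe_toNat hmt
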